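/- Let a, b, σ ∈ ℝ with σ ≥ 0, and let λ ∈ ℂ be such that λ + σ² ∉ (−∞, 0]. Then the following are equivalent: (i) there exists a bounded, twice differentiable function v : [0,∞) → ℂ, not identically zero, with v″(x) = (λ+σ²)·v(x) for all x ≥ 0 and λ·v(0) = a·v(0) − b·v′(0); (ii) λ − a − b·√(λ+σ²) = 0, where √ is the principal square root. -/

import Mathlib

/-- Principal complex square root: branch cut along `(-∞,0]`, `Re (csqrt z) ≥ 0`. -/
noncomputable def csqrt (z : ℂ) : ℂ := z ^ (1/2 : ℂ)

open Set Complex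

lemma csqrt_sq (z : ℂ) : (csqrt z) ^ 2 = z := by
  have := Complex.cpow_nat_inv_pow z (n := 2) (by norm_num)
  simpa [csqrt, show ((2:ℕ)⁻¹ : ℂ) = (1/2 : ℂ) by norm_num] using this

lemma csqrt_re_pos {z : ℂ} (hm : z.im ≠ 0 ∨ 0 < z.re) : 0 < (csqrt z).re := by
  have hz : z ≠ 0 := by
    intro h; rcases hm with h1 | h1 <;> simp [h] at h1
  have harg : z.arg ≠ Real.pi := by
    intro hpi
    obtain ⟨hre, him⟩ := Complex.arg_eq_pi_iff.mp hpi
    rcases hm with h1 | h1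
    · exact h1 him
    · linarith
  have harg_lt : z.arg < Real.pi := lt_of_le_of_ne (Complex.arg_le_pi z) harg
  have harg_gt : -Real.pi < z.arg := Complex.neg_pi_lt_arg z
  rw [csqrt, Complex.cpow_def_of_ne_zero hz, Complex.exp_re]
  apply mul_pos (Real.exp_pos _)
  apply Real.cos_pos_of_mem_Ioo
  constructor
  · simp only [Complex.mul_im, Complex.log_re, Complex.log_im]
    norm_num
    linarith
  · simp only [Complex.mul_im, Complex.log_re, Complex.log_im]
    norm_num
    linarith

lemma exp_hasDerivAt (c : ℂ) (x : ℝ) :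
    HasDerivAt (fun t : ℝ => Complex.exp (c * t)) (c * Complex.exp (c * x)) x := by
  have h1 : HasDerivAt (fun w : ℂ => Complex.exp (c * w)) (c * Complex.exp (c * x)) (x : ℂ) := by
    have := (Complex.hasDerivAt_exp (c * x)).comp (x : ℂ)
      ((hasDerivAt_id (x : ℂ)).const_mul c)
    exact this.congr_deriv (by ring)
  exact h1.comp_ofReal

lemma ode_unique (c : ℂ) (w : ℝ → ℂ)
    (hw : ∀ x : ℝ, 0 ≤ x → HasDerivWithinAt w (c * w x) (Set.Ici 0) x) :
    ∀ x : ℝ, 0 ≤ x → w x = w 0 * Complex.exp (c * x) := by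
  intro x hx
  set g : ℝ → ℂ := fun t => w t * Complex.exp (-c * t) with hg
  have hderiv : ∀ t ∈ Set.Ico (0:ℝ) x, HasDerivWithinAt g 0 (Set.Ici t) t := by
    intro t ht
    have h1 : HasDerivWithinAt w (c * w t) (Set.Ici t) t :=
      (hw t ht.1).mono (Set.Ici_subset_Ici.mpr ht.1)
    have h2 : HasDerivWithinAt (fun s : ℝ => Complex.exp (-c * s))
        (-c * Complex.exp (-c * t)) (Set.Ici t) t :=
      (exp_hasDerivAt (-c) t).hasDerivWithinAt
    have := h1.mul h2
    refine this.congr_deriv ?_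
    ring
  have hcont : ContinuousOn g (Set.Icc 0 x) := by
    have h1 : ContinuousOn w (Set.Ici 0) := fun t ht => (hw t ht).continuousWithinAt
    have h2 : Continuous (fun s : ℝ => Complex.exp (-c * s)) := by continuity
    exact ((h1.mono Set.Icc_subset_Ici_self).mul (h2.continuousOn))
  have := constant_of_has_deriv_right_zero hcont hderiv x ⟨hx, le_refl x⟩
  have hg0 : g 0 = w 0 := by simp [hg]
  have hgx : g x = w x * Complex.exp (-c * x) := rfl
  rw [hgx, hg0] at this
  have hne : Complex.exp (-c * x) ≠ 0 := Complex.exp_ne_zero _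
  have : w x = w 0 * Complex.exp (c * x) := by
    have h3 : w x * Complex.exp (-c * x) * Complex.exp (c * x)
        = w 0 * Complex.exp (c * x) := by rw [this]
    rwa [mul_assoc, ← Complex.exp_add, neg_mul, neg_add_cancel, Complex.exp_zero, mul_one] at h3
  exact this


/-- For `a, b, σ ∈ ℝ`, `σ ≥ 0`, and `λ ∈ ℂ` with `λ + σ² ∉ (-∞,0]`:
there is a bounded, twice differentiable, not identically vanishing `v : [0,∞) → ℂ` with
`v'' = (λ+σ²)v` and `λ·v(0) = a·v(0) − b·v'(0)`  iff  `λ − a − b·√(λ+σ²) = 0`. -/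
theorem stmt_2 (a b σ : ℝ) (hσ : 0 ≤ σ) (lam : ℂ)
    (hm : (lam + (σ:ℂ)^2).im ≠ 0 ∨ 0 < (lam + (σ:ℂ)^2).re) :
    (∃ v v' : ℝ → ℂ,
      (∀ x : ℝ, 0 ≤ x → HasDerivWithinAt v (v' x) (Set.Ici 0) x) ∧
      (∀ x : ℝ, 0 ≤ x → HasDerivWithinAt v' ((lam + (σ:ℂ)^2) * v x) (Set.Ici 0) x) ∧
      (∃ C : ℝ, ∀ x : ℝ, 0 ≤ x → ‖v x‖ ≤ C) ∧
      (∃ x : ℝ, 0 ≤ x ∧ v x ≠ 0) ∧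
      lam * v 0 = a * v 0 - b * v' 0)
    ↔ lam - a - b * csqrt (lam + (σ:ℂ)^2) = 0 := by
  set z : ℂ := lam + (σ:ℂ)^2 with hz
  set μ : ℂ := csqrt z with hμ
  have hμ2 : μ ^ 2 = z := csqrt_sq z
  have hre : 0 < μ.re := csqrt_re_pos hm
  have hμ0 : μ ≠ 0 := fun h => by simp [h] at hre
  constructor
  · rintro ⟨v, v', hd1, hd2, ⟨C, hC⟩, ⟨x0, hx0, hvx0⟩, hbc⟩
    set wp : ℝ → ℂ := fun t => v' t + μ * v t with hwpdef
    set wm : ℝ → ℂ := fun t => v' t - μ * v t with hwmdef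
    have hwp : ∀ t : ℝ, 0 ≤ t → HasDerivWithinAt wp (μ * wp t) (Set.Ici 0) t := by
      intro t ht
      have := (hd2 t ht).add ((hd1 t ht).const_mul μ)
      refine this.congr_deriv ?_
      simp only [hwpdef]
      rw [← hμ2]; ring
    have hwm : ∀ t : ℝ, 0 ≤ t → HasDerivWithinAt wm (-μ * wm t) (Set.Ici 0) t := by
      intro t ht
      have := (hd2 t ht).sub ((hd1 t ht).const_mul μ)
      refine this.congr_deriv ?_
      simp only [hwmdef]
      rw [← hμ2]; ring
    have hwp_eq := ode_unique μ wp hwp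
    have hwm_eq := ode_unique (-μ) wm hwm
    have hrel : ∀ t : ℝ, (2 : ℂ) * μ * v t = wp t - wm t := by
      intro t; simp only [hwpdef, hwmdef]; ring
    -- boundedness argument
    set C' : ℝ := max C 0 with hC'
    set K : ℝ := 2 * ‖μ‖ * C' + ‖wm 0‖ with hK
    have hK0 : 0 ≤ K := by positivity
    have hbound : ∀ t : ℝ, 0 ≤ t → ‖wp 0‖ * Real.exp (μ.re * t) ≤ K := by
      intro t ht
      have h1 : ‖wp t‖ = ‖wp 0‖ * Real.exp (μ.re * t) := by
        rw [hwp_eq t ht, norm_mul, Complex.norm_exp]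
        congr 2
        simp [Complex.mul_re]
      have h2 : ‖wm t‖ ≤ ‖wm 0‖ := by
        rw [hwm_eq t ht, norm_mul, Complex.norm_exp]
        have : ((-μ) * (t:ℂ)).re = -(μ.re * t) := by simp [Complex.mul_re]
        rw [this]
        have := Real.exp_le_one_iff.mpr (by nlinarith : -(μ.re * t) ≤ 0)
        nlinarith [norm_nonneg (wm 0)]
      have h3 : ‖wp t‖ ≤ 2 * ‖μ‖ * C' + ‖wm 0‖ := by
        have h4 : wp t = 2 * μ * v t + wm t := by rw [hrel t]; ring
        rw [h4]
        calc ‖2 * μ * v t + wm t‖ ≤ ‖2 * μ * v t‖ + ‖wm t‖ := norm_add_le _ _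
          _ ≤ 2 * ‖μ‖ * C' + ‖wm 0‖ := by
              have : ‖(2:ℂ) * μ * v t‖ = 2 * ‖μ‖ * ‖v t‖ := by
                rw [norm_mul, norm_mul]; norm_num
              rw [this]
              have hvt : ‖v t‖ ≤ C' := le_trans (hC t ht) (le_max_left _ _)
              have : 2 * ‖μ‖ * ‖v t‖ ≤ 2 * ‖μ‖ * C' := by nlinarith [norm_nonneg μ]
              linarith [h2]
      rw [← h1]; linarith
    have hwp0 : wp 0 = 0 := by
      by_contra hne
      have hnp : 0 < ‖wp 0‖ := norm_pos_iff.mpr hne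
      set M : ℝ := K / ‖wp 0‖ with hM
      have hM0 : 0 ≤ M := div_nonneg hK0 (le_of_lt hnp)
      set t : ℝ := (Real.log (M + 1) + 1) / μ.re with ht
      have hlog : 0 ≤ Real.log (M + 1) := Real.log_nonneg (by linarith)
      have ht0 : 0 ≤ t := by positivity
      have := hbound t ht0
      have hexp : Real.exp (μ.re * t) = (M + 1) * Real.exp 1 := by
        rw [ht, mul_div_cancel₀ _ (ne_of_gt hre), Real.exp_add, Real.exp_log (by linarith)]
      rw [hexp] at this
      have he1 : (1:ℝ) < Real.exp 1 := by
        have := Real.add_one_le_exp 1; linarith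
      have hKM : ‖wp 0‖ * M = K := by
        rw [hM, mul_comm, div_mul_cancel₀ _ (ne_of_gt hnp)]
      nlinarith [this]
    -- v'(0) = -μ v(0)
    have hv'0 : v' 0 = -μ * v 0 := by
      have h : v' 0 + μ * v 0 = 0 := hwp0
      linear_combination h
    have hv00 : v 0 ≠ 0 := by
      intro h0
      have hwm0 : wm 0 = 0 := by simp [hwmdef, h0, hv'0]
      have h1 := hrel x0
      rw [hwp_eq x0 hx0, hwm_eq x0 hx0, hwp0, hwm0] at h1
      have h2 : (2:ℂ) * μ * v x0 = 0 := by rw [h1]; ring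
      simp [hμ0, mul_eq_zero] at h2
      exact hvx0 h2
    have key : (lam - a - b * μ) * v 0 = 0 := by
      rw [hv'0] at hbc
      linear_combination hbc
    exact (mul_eq_zero.mp key).resolve_right hv00
  · intro heq
    refine ⟨fun x => Complex.exp (-μ * x), fun x => -μ * Complex.exp (-μ * x),
      fun x hx => (exp_hasDerivAt (-μ) x).hasDerivWithinAt,
      fun x hx => ?_, ⟨1, fun x hx => ?_⟩, ⟨0, le_refl 0, by simp⟩, ?_⟩
    · have := ((exp_hasDerivAt (-μ) x).const_mul (-μ)).hasDerivWithinAt (s := Set.Ici 0)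
      refine this.congr_deriv ?_
      rw [← hμ2]; ring
    · rw [Complex.norm_exp]
      apply Real.exp_le_one_iff.mpr
      simp [Complex.mul_re]
      nlinarith
    · simp only [Complex.ofReal_zero, mul_zero, Complex.exp_zero, mul_one]
      linear_combination heq
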